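/- Exponential decay of the error probability under XLRT. Suppose the true demand model is i = 1 and the pricing process follows the XLRT policy with thresholds η_0, η_1. Set a = (min over k ∈ Fin 3 of I(q 1 k ‖ q 0 k)) − η_1 > 0. Then for every t ≥ 1, P(L_t / t < η_1) ≤ exp(−2 a² t / (M − m)²). -/

import Mathlib

open MeasureTheory ProbabilityTheory Finset Real

noncomputable section

/-- Probability of outcome `y ∈ {0,1}` under a Bernoulli distribution with success
probability `p`:  `f p y = p^y (1-p)^(1-y)`. -/
def bern (p : ℝ) (y : ℕ) : ℝ := p ^ y * (1 - p) ^ (1 - y)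

/-- The Kullback–Leibler divergence between Bernoulli(α) and Bernoulli(β). -/
def klBern (α β : ℝ) : ℝ :=
  α * Real.log (α / β) + (1 - α) * Real.log ((1 - α) / (1 - β))

variable {Ω : Type*} {mΩ : MeasurableSpace Ω}

/-- The (unnormalized) log-likelihood statistic for the three-price (exploration) setting:
`L t = ∑_{j=1}^t log (f₁^{a_j}(y_j) / f₀^{a_j}(y_j))`, with `L 0 = 0`. -/
def LLR3 (q : Fin 2 → Fin 3 → ℝ) (a : ℕ → Ω → Fin 3) (y : ℕ → Ω → ℕ) (t : ℕ) (ω : Ω) : ℝ :=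
  ∑ j ∈ Finset.Icc 1 t,
    Real.log (bern (q 1 (a j ω)) (y j ω) / bern (q 0 (a j ω)) (y j ω))

/-- A pricing process with three available prices (arms `0`, `1` are the optimal prices of the
two demand models, arm `2` is the exploration price) under true demand model `i`: actions
`a t` are `ℱ (t-1)`-measurable, outcomes `y t ∈ {0,1}` are `ℱ t`-measurable, and the
conditional probability of a successful sale at time `t` given the past is `q i (a t)` a.s. -/
structure IsPricingProcess3 (μ : Measure Ω) (ℱ : Filtration ℕ mΩ)
    (q : Fin 2 → Fin 3 → ℝ) (i : Fin 2) (a : ℕ → Ω → Fin 3) (y : ℕ → Ω → ℕ) : Prop where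
  meas_a : ∀ t, 1 ≤ t → Measurable[ℱ (t - 1)] (a t)
  meas_y : ∀ t, 1 ≤ t → Measurable[ℱ t] (y t)
  y_range : ∀ t, 1 ≤ t → ∀ ω, y t ω = 0 ∨ y t ω = 1
  sale_prob : ∀ t, 1 ≤ t →
    μ[Set.indicator {ω | y t ω = 1} (fun _ => (1 : ℝ)) | ℱ (t - 1)]
      =ᵐ[μ] fun ω => q i (a t ω)

/-- The XLRT policy with thresholds `η₀, η₁`: for `t ≥ 1`, `a (t+1) = 0` if `L t < -η₀`,
`a (t+1) = 2` (the exploration price) if `-η₀ ≤ L t ≤ η₁`, and `a (t+1) = 1` if `L t > η₁`. -/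
def IsXLRT (q : Fin 2 → Fin 3 → ℝ) (a : ℕ → Ω → Fin 3) (y : ℕ → Ω → ℕ) (η₀ η₁ : ℝ) : Prop :=
  ∀ t, 1 ≤ t → ∀ ω,
    a (t + 1) ω =
      if LLR3 q a y t ω < -η₀ then 0 else if LLR3 q a y t ω ≤ η₁ then 2 else 1

private def uu (q : Fin 2 → Fin 3 → ℝ) (k : Fin 3) : ℝ :=
  Real.log (bern (q 1 k) 1 / bern (q 0 k) 1)

private def vv (q : Fin 2 → Fin 3 → ℝ) (k : Fin 3) : ℝ :=
  Real.log (bern (q 1 k) 0 / bern (q 0 k) 0)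

lemma quad_bound {p : ℝ} (hp0 : 0 ≤ p) (hp1 : p ≤ 1) (x : ℝ) :
    Real.log (1 - p + p * Real.exp x) ≤ x ^ 2 / 8 + p * x := by
  have hD : ∀ z : ℝ, 0 < 1 - p + p * Real.exp z := by
    intro z
    rcases eq_or_lt_of_le hp0 with h | h
    · simp [← h]
    · have := mul_pos h (exp_pos z)
      have : (0:ℝ) ≤ 1 - p := by linarith
      linarith [mul_pos ‹0 < p› (exp_pos z)]
  set G : ℝ → ℝ := fun x => x / 4 + p - p * Real.exp x / (1 - p + p * Real.exp x) with hGdef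
  set g : ℝ → ℝ := fun x => x ^ 2 / 8 + p * x - Real.log (1 - p + p * Real.exp x) with hgdef
  have hDd : ∀ z : ℝ, HasDerivAt (fun x => 1 - p + p * Real.exp x) (p * Real.exp z) z :=
    fun z => ((Real.hasDerivAt_exp z).const_mul p).const_add (1 - p)
  have hgd : ∀ z : ℝ, HasDerivAt g (G z) z := by
    intro z
    have h1 : HasDerivAt (fun x : ℝ => x ^ 2 / 8 + p * x) (z / 4 + p) z := by
      have := ((hasDerivAt_pow 2 z).div_const 8).add ((hasDerivAt_id z).const_mul p)
      convert this using 1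
      all_goals first | rfl | (push_cast; ring)
    have h2 : HasDerivAt (fun x => Real.log (1 - p + p * Real.exp x))
        (p * Real.exp z / (1 - p + p * Real.exp z)) z := (hDd z).log (hD z).ne'
    exact h1.sub h2
  have hGd : ∀ z : ℝ, HasDerivAt G
      (1/4 - (p * Real.exp z * (1 - p + p * Real.exp z) - p * Real.exp z * (p * Real.exp z)) /
        (1 - p + p * Real.exp z) ^ 2) z := by
    intro z
    have h1 : HasDerivAt (fun x : ℝ => x / 4 + p) (1/4) z := by
      simpa using ((hasDerivAt_id z).div_const 4).add_const p
    have h2 : HasDerivAt (fun x => p * Real.exp x / (1 - p + p * Real.exp x))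
        ((p * Real.exp z * (1 - p + p * Real.exp z) - p * Real.exp z * (p * Real.exp z)) /
          (1 - p + p * Real.exp z) ^ 2) z :=
      ((Real.hasDerivAt_exp z).const_mul p).div (hDd z) (hD z).ne'
    exact h1.sub h2
  have hGd' : ∀ z : ℝ, 0 ≤ deriv G z := by
    intro z
    rw [(hGd z).deriv]
    set E := p * Real.exp z with hE
    set D := 1 - p + p * Real.exp z with hDz
    have hDpos : 0 < D := hD z
    have hE0 : 0 ≤ E := mul_nonneg hp0 (exp_pos z).le
    have hED : E ≤ D := by simp only [hDz, hE]; linarith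
    have key : (E * D - E * E) / D ^ 2 ≤ 1/4 := by
      rw [div_le_iff₀ (by positivity)]
      nlinarith [sq_nonneg (D - 2 * E)]
    linarith
  have hGmono : Monotone G := by
    refine monotone_of_deriv_nonneg (fun z => (hGd z).differentiableAt) hGd'
  have hG0 : G 0 = 0 := by simp [hGdef]
  have hgc : Continuous g := by
    have : Differentiable ℝ g := fun z => (hgd z).differentiableAt
    exact this.continuous
  have hg0 : g 0 = 0 := by simp [hgdef]
  have hgx : 0 ≤ g x := by
    rcases le_total 0 x with hx | hx
    · have hmono : MonotoneOn g (Set.Ici 0) := by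
        refine monotoneOn_of_deriv_nonneg (convex_Ici 0) hgc.continuousOn
          (fun z _ => (hgd z).differentiableAt.differentiableWithinAt) ?_
        intro z hz
        rw [(hgd z).deriv]
        rw [interior_Ici] at hz
        have := hGmono (le_of_lt hz)
        rw [hG0] at this
        exact this
      have := hmono (Set.mem_Ici.2 le_rfl) (Set.mem_Ici.2 hx) hx
      rwa [hg0] at this
    · have hanti : AntitoneOn g (Set.Iic 0) := by
        refine antitoneOn_of_deriv_nonpos (convex_Iic 0) hgc.continuousOn
          (fun z _ => (hgd z).differentiableAt.differentiableWithinAt) ?_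
        intro z hz
        rw [(hgd z).deriv]
        rw [interior_Iic] at hz
        have := hGmono (le_of_lt hz)
        rw [hG0] at this
        exact this
      have := hanti (Set.mem_Iic.2 hx) (Set.mem_Iic.2 le_rfl) hx
      rwa [hg0] at this
  have : Real.log (1 - p + p * Real.exp x) ≤ x ^ 2 / 8 + p * x := by
    have := hgx
    simp only [hgdef] at this
    linarith
  exact this

lemma two_point {p : ℝ} (hp0 : 0 ≤ p) (hp1 : p ≤ 1) (s t : ℝ) :
    p * Real.exp s + (1 - p) * Real.exp t ≤
      Real.exp (p * s + (1 - p) * t + (s - t) ^ 2 / 8) := by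
  have hD : (0:ℝ) < 1 - p + p * Real.exp (s - t) := by
    rcases eq_or_lt_of_le hp0 with h | h
    · simp [← h]
    · have h1 : (0:ℝ) ≤ 1 - p := by linarith
      linarith [mul_pos h (exp_pos (s - t))]
  have key := quad_bound hp0 hp1 (s - t)
  have key2 : 1 - p + p * Real.exp (s - t) ≤ Real.exp ((s - t) ^ 2 / 8 + p * (s - t)) :=
    (Real.log_le_iff_le_exp hD).mp key
  calc p * Real.exp s + (1 - p) * Real.exp t
      = (1 - p + p * Real.exp (s - t)) * Real.exp t := by
        rw [add_mul, mul_assoc, ← Real.exp_add, sub_add_cancel]; ring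
    _ ≤ Real.exp ((s - t) ^ 2 / 8 + p * (s - t)) * Real.exp t :=
        mul_le_mul_of_nonneg_right key2 (exp_pos t).le
    _ = Real.exp (p * s + (1 - p) * t + (s - t) ^ 2 / 8) := by
        rw [← Real.exp_add]; congr 1; ring



lemma integrable_of_bdd {μ : Measure Ω} [IsProbabilityMeasure μ] {f : Ω → ℝ}
    (hf : AEStronglyMeasurable f μ) {C : ℝ} (h : ∀ ω, ‖f ω‖ ≤ C) : Integrable f μ :=
  (integrable_const C).mono' hf (Filter.Eventually.of_forall h)

lemma integral_mul_indicator_eq (μ : Measure Ω) [IsProbabilityMeasure μ]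
    {F : MeasurableSpace Ω} (hF : F ≤ mΩ) {G r : Ω → ℝ} {A : Set Ω}
    (hG : StronglyMeasurable[F] G) (CG : ℝ) (hGb : ∀ ω, ‖G ω‖ ≤ CG)
    (hind : Integrable (A.indicator fun _ => (1:ℝ)) μ)
    (hcond : μ[A.indicator (fun _ => (1:ℝ)) | F] =ᵐ[μ] r) :
    ∫ ω, G ω * A.indicator (fun _ => (1:ℝ)) ω ∂μ = ∫ ω, G ω * r ω ∂μ := by
  haveI : SigmaFinite (μ.trim hF) := inferInstance
  have hprod : Integrable (G * A.indicator fun _ => (1:ℝ)) μ :=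
    hind.bdd_mul ((hG.mono hF).aestronglyMeasurable) (Filter.Eventually.of_forall hGb)
  have h1 : ∫ ω, (G * A.indicator fun _ => (1:ℝ)) ω ∂μ
      = ∫ ω, (μ[G * A.indicator fun _ => (1:ℝ) | F]) ω ∂μ := (integral_condExp hF).symm
  have h2 : μ[G * A.indicator fun _ => (1:ℝ) | F] =ᵐ[μ] G * μ[A.indicator fun _ => (1:ℝ) | F] :=
    condExp_stronglyMeasurable_mul_of_bound hF hG hind CG (Filter.Eventually.of_forall hGb)
  have h3 : (G * μ[A.indicator fun _ => (1:ℝ) | F] : Ω → ℝ) =ᵐ[μ] fun ω => G ω * r ω := by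
    filter_upwards [hcond] with ω hω
    simp [hω]
  calc ∫ ω, G ω * A.indicator (fun _ => (1:ℝ)) ω ∂μ
      = ∫ ω, (μ[G * A.indicator fun _ => (1:ℝ) | F]) ω ∂μ := (integral_condExp hF).symm
    _ = ∫ ω, G ω * r ω ∂μ := integral_congr_ae (h2.trans h3)


set_option maxHeartbeats 1000000

/-- **Exponential decay of the error probability under XLRT.** Suppose the true demand model
is `i = 1` and the pricing process follows the XLRT policy with thresholds `η₀, η₁`. With
`a = min_k I(q 1 k ‖ q 0 k) − η₁ > 0`, for every `t ≥ 1`,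
`P(L_t / t < η₁) ≤ exp(−2 a² t / (M − m)²)`. -/
theorem xlrt_error_probability_exponential_decay
    (μ : Measure Ω) [IsProbabilityMeasure μ] (ℱ : Filtration ℕ mΩ)
    (q : Fin 2 → Fin 3 → ℝ)
    (hq : ∀ i k, q i k ∈ Set.Ioo (0 : ℝ) 1)
    (hni : ∀ k, q 0 k ≠ q 1 k)
    (a : ℕ → Ω → Fin 3) (y : ℕ → Ω → ℕ)
    (η₀ η₁ : ℝ) (hη₀0 : 0 ≤ η₀) (hη₁0 : 0 ≤ η₁)
    (hη₁ : η₁ < Finset.univ.inf' ⟨0, Finset.mem_univ 0⟩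
      (fun k : Fin 3 => klBern (q 1 k) (q 0 k)))
    (hη₀ : η₀ < Finset.univ.inf' ⟨0, Finset.mem_univ 0⟩
      (fun k : Fin 3 => klBern (q 0 k) (q 1 k)))
    (hproc : IsPricingProcess3 μ ℱ q 1 a y)
    (hpol : IsXLRT q a y η₀ η₁)
    (aa m M : ℝ)
    (haa : aa = Finset.univ.inf' ⟨0, Finset.mem_univ 0⟩
        (fun k : Fin 3 => klBern (q 1 k) (q 0 k)) - η₁)
    (hm : m = Finset.univ.inf' ⟨(0, 0), Finset.mem_univ _⟩
      (fun p : Fin 3 × Fin 2 =>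
        Real.log (bern (q 1 p.1) (p.2 : ℕ) / bern (q 0 p.1) (p.2 : ℕ))))
    (hM : M = Finset.univ.sup' ⟨(0, 0), Finset.mem_univ _⟩
      (fun p : Fin 3 × Fin 2 =>
        Real.log (bern (q 1 p.1) (p.2 : ℕ) / bern (q 0 p.1) (p.2 : ℕ)))) :
    0 < aa ∧
      ∀ t : ℕ, 1 ≤ t →
        μ {ω | LLR3 q a y t ω / t < η₁}
          ≤ ENNReal.ofReal (Real.exp (-2 * aa ^ 2 * t / (M - m) ^ 2)) := by
  obtain ⟨meas_a, meas_y, y_range, sale_prob⟩ := hproc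
  set I1 : ℝ := Finset.univ.inf' ⟨0, Finset.mem_univ 0⟩
      (fun k : Fin 3 => klBern (q 1 k) (q 0 k)) with hI1def
  have haapos : 0 < aa := by rw [haa]; linarith
  have hbern1 : ∀ p : ℝ, bern p 1 = p := fun p => by simp [bern]
  have hbern0 : ∀ p : ℝ, bern p 0 = 1 - p := fun p => by simp [bern]
  have c1 : ((1 : Fin 2) : ℕ) = 1 := rfl
  have c0 : ((0 : Fin 2) : ℕ) = 0 := rfl
  have hmM : ∀ k : Fin 3, m ≤ uu q k ∧ uu q k ≤ M ∧ m ≤ vv q k ∧ vv q k ≤ M := by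
    intro k
    refine ⟨?_, ?_, ?_, ?_⟩
    · rw [hm]
      have := Finset.inf'_le (f := fun p : Fin 3 × Fin 2 =>
        Real.log (bern (q 1 p.1) (p.2 : ℕ) / bern (q 0 p.1) (p.2 : ℕ)))
        (b := (k, 1)) (Finset.mem_univ _)
      simpa [uu, c1] using this
    · rw [hM]
      have := Finset.le_sup' (f := fun p : Fin 3 × Fin 2 =>
        Real.log (bern (q 1 p.1) (p.2 : ℕ) / bern (q 0 p.1) (p.2 : ℕ)))
        (b := (k, 1)) (Finset.mem_univ _)
      simpa [uu, c1] using this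
    · rw [hm]
      have := Finset.inf'_le (f := fun p : Fin 3 × Fin 2 =>
        Real.log (bern (q 1 p.1) (p.2 : ℕ) / bern (q 0 p.1) (p.2 : ℕ)))
        (b := (k, 0)) (Finset.mem_univ _)
      simpa [vv, c0] using this
    · rw [hM]
      have := Finset.le_sup' (f := fun p : Fin 3 × Fin 2 =>
        Real.log (bern (q 1 p.1) (p.2 : ℕ) / bern (q 0 p.1) (p.2 : ℕ)))
        (b := (k, 0)) (Finset.mem_univ _)
      simpa [vv, c0] using this
  have hkl : ∀ k, klBern (q 1 k) (q 0 k) = q 1 k * uu q k + (1 - q 1 k) * vv q k := by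
    intro k; simp [klBern, uu, vv, hbern1, hbern0]
  have huv : uu q 0 ≠ vv q 0 := by
    intro h
    have h0 := hq 0 0
    have h1 := hq 1 0
    simp only [uu, vv, hbern1, hbern0] at h
    have e1 : (0:ℝ) < q 1 0 / q 0 0 := div_pos h1.1 h0.1
    have e2 : (0:ℝ) < (1 - q 1 0) / (1 - q 0 0) :=
      div_pos (by linarith [h1.2]) (by linarith [h0.2])
    have heq := Real.log_injOn_pos (Set.mem_Ioi.2 e1) (Set.mem_Ioi.2 e2) h
    rw [div_eq_div_iff (ne_of_gt h0.1) (by linarith [h0.2] : (1:ℝ) - q 0 0 ≠ 0)] at heq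
    exact hni 0 (by nlinarith)
  have hMm : m < M := by
    rcases lt_or_gt_of_ne huv with h | h
    · have := hmM 0; linarith [this.1, this.2.2.2]
    · have := hmM 0; linarith [this.2.1, this.2.2.1]
  set lam : ℝ := 4 * aa / (M - m) ^ 2 with hlamdef
  have hMm2 : (0:ℝ) < (M - m) ^ 2 := pow_pos (by linarith) 2
  have hlam0 : 0 < lam := div_pos (by linarith) hMm2
  set c : ℝ := Real.exp (lam ^ 2 * (M - m) ^ 2 / 8 - lam * I1) with hcdef
  have hcpos : 0 < c := Real.exp_pos _
  -- pointwise mgf bound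
  have claim : ∀ k : Fin 3,
      q 1 k * Real.exp (-(lam * uu q k)) + (1 - q 1 k) * Real.exp (-(lam * vv q k)) ≤ c := by
    intro k
    have hp := hq 1 k
    refine (two_point hp.1.le hp.2.le (-(lam * uu q k)) (-(lam * vv q k))).trans ?_
    rw [hcdef, Real.exp_le_exp]
    have hkl' : I1 ≤ klBern (q 1 k) (q 0 k) := by
      rw [hI1def]; exact Finset.inf'_le _ (Finset.mem_univ k)
    obtain ⟨hb1, hb2, hb3, hb4⟩ := hmM k
    have hsq : (uu q k - vv q k) ^ 2 ≤ (M - m) ^ 2 := by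
      nlinarith [mul_nonneg (by linarith : (0:ℝ) ≤ (M - uu q k) + (vv q k - m))
        (by linarith : (0:ℝ) ≤ (uu q k - m) + (M - vv q k))]
    have hsq2 : (-(lam * uu q k) - -(lam * vv q k)) ^ 2 ≤ lam ^ 2 * (M - m) ^ 2 := by
      have : (-(lam * uu q k) - -(lam * vv q k)) ^ 2 = lam ^ 2 * (uu q k - vv q k) ^ 2 := by ring
      rw [this]
      exact mul_le_mul_of_nonneg_left hsq (sq_nonneg lam)
    have hmean : q 1 k * (-(lam * uu q k)) + (1 - q 1 k) * (-(lam * vv q k))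
        = -(lam * klBern (q 1 k) (q 0 k)) := by rw [hkl k]; ring
    have hm2 : -(lam * klBern (q 1 k) (q 0 k)) ≤ -(lam * I1) :=
      neg_le_neg (mul_le_mul_of_nonneg_left hkl' hlam0.le)
    rw [hmean]
    linarith
  -- measurability
  have hameas : ∀ j t : ℕ, 1 ≤ j → j ≤ t → Measurable[ℱ t] (a j) := fun j t hj hjt =>
    (meas_a j hj).mono (ℱ.mono (by omega)) le_rfl
  have hymeas : ∀ j t : ℕ, 1 ≤ j → j ≤ t → Measurable[ℱ t] (y j) := fun j t hj hjt =>
    (meas_y j hj).mono (ℱ.mono hjt) le_rfl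
  have hXmeas : ∀ j t, 1 ≤ j → j ≤ t → Measurable[ℱ t] (fun ω =>
      Real.log (bern (q 1 (a j ω)) (y j ω) / bern (q 0 (a j ω)) (y j ω))) := by
    intro j t hj hjt
    exact (measurable_of_countable fun p : Fin 3 × ℕ =>
      Real.log (bern (q 1 p.1) p.2 / bern (q 0 p.1) p.2)).comp
      ((hameas j t hj hjt).prodMk (hymeas j t hj hjt))
  have hLmeas : ∀ t, Measurable[ℱ t] (LLR3 q a y t) := by
    intro t
    unfold LLR3
    refine Finset.measurable_sum _ fun j hj => ?_
    rw [Finset.mem_Icc] at hj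
    exact hXmeas j t hj.1 hj.2
  have hWmeas : ∀ t, Measurable[ℱ t] (fun ω => Real.exp (-(lam * LLR3 q a y t ω))) := by
    intro t
    exact Real.measurable_exp.comp (((hLmeas t).const_mul lam).neg)
  -- bounds
  have hXb : ∀ j, 1 ≤ j → ∀ ω,
      m ≤ Real.log (bern (q 1 (a j ω)) (y j ω) / bern (q 0 (a j ω)) (y j ω)) ∧
      Real.log (bern (q 1 (a j ω)) (y j ω) / bern (q 0 (a j ω)) (y j ω)) ≤ M := by
    intro j hj ω
    obtain ⟨hb1, hb2, hb3, hb4⟩ := hmM (a j ω)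
    rcases y_range j hj ω with h | h <;> rw [h]
    · simp only [vv] at hb3 hb4; exact ⟨hb3, hb4⟩
    · simp only [uu] at hb1 hb2; exact ⟨hb1, hb2⟩
  have hLlb : ∀ (t : ℕ) (ω : Ω), (t : ℝ) * m ≤ LLR3 q a y t ω := by
    intro t ω
    unfold LLR3
    calc (t : ℝ) * m = ∑ _j ∈ Finset.Icc 1 t, m := by
          rw [Finset.sum_const, Nat.card_Icc, Nat.add_sub_cancel, nsmul_eq_mul]
      _ ≤ _ := Finset.sum_le_sum fun j hj => (hXb j (Finset.mem_Icc.mp hj).1 ω).1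
  set B : ℝ := Real.exp (lam * |m|) with hBdef
  have hBpos : 0 < B := Real.exp_pos _
  have hexpb : ∀ s : ℝ, m ≤ s → Real.exp (-(lam * s)) ≤ B := by
    intro s hs
    rw [hBdef, Real.exp_le_exp]
    nlinarith [mul_le_mul_of_nonneg_left hs hlam0.le,
      mul_le_mul_of_nonneg_left (neg_le_abs m) hlam0.le]
  have hB1 : ∀ s : ℝ, m ≤ s → ‖Real.exp (-(lam * s))‖ ≤ B := by
    intro s hs
    rw [Real.norm_eq_abs, abs_of_pos (Real.exp_pos _)]
    exact hexpb s hs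
  have hWb : ∀ t ω, ‖Real.exp (-(lam * LLR3 q a y t ω))‖ ≤ B ^ t := by
    intro t ω
    rw [Real.norm_eq_abs, abs_of_pos (Real.exp_pos _), hBdef, ← Real.exp_nat_mul,
      Real.exp_le_exp]
    have h1 := mul_le_mul_of_nonneg_left (hLlb t ω) hlam0.le
    have h2 : lam * ((t : ℝ) * m) = (t : ℝ) * (lam * m) := by ring
    have h3 : (0:ℝ) ≤ (t : ℝ) := Nat.cast_nonneg t
    nlinarith [mul_le_mul_of_nonneg_left (mul_le_mul_of_nonneg_left (neg_le_abs m) hlam0.le) h3]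
  have hWint : ∀ t, Integrable (fun ω => Real.exp (-(lam * LLR3 q a y t ω))) μ := by
    intro t
    exact integrable_of_bdd
      (((hWmeas t).mono (ℱ.le t) le_rfl).aestronglyMeasurable) (hWb t)
  -- main induction: mgf bound
  have main : ∀ t : ℕ, ∫ ω, Real.exp (-(lam * LLR3 q a y t ω)) ∂μ ≤ c ^ t := by
    intro t
    induction t with
    | zero =>
      have : ∀ ω : Ω, Real.exp (-(lam * LLR3 q a y 0 ω)) = 1 := by
        intro ω
        have : LLR3 q a y 0 ω = 0 := by simp [LLR3]
        simp [this]
      rw [integral_congr_ae (Filter.Eventually.of_forall this)]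
      simp
    | succ t ih =>
      have ht1 : 1 ≤ t + 1 := by omega
      set A : Set Ω := {ω | y (t + 1) ω = 1} with hAdef
      set W : Ω → ℝ := fun ω => Real.exp (-(lam * LLR3 q a y t ω)) with hWdef
      set E1 : Ω → ℝ := fun ω => Real.exp (-(lam * uu q (a (t + 1) ω))) with hE1def
      set E0 : Ω → ℝ := fun ω => Real.exp (-(lam * vv q (a (t + 1) ω))) with hE0def
      have hsplit : ∀ ω, LLR3 q a y (t + 1) ω = LLR3 q a y t ω +
          Real.log (bern (q 1 (a (t+1) ω)) (y (t+1) ω) / bern (q 0 (a (t+1) ω)) (y (t+1) ω)) := by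
        intro ω
        rw [LLR3, LLR3, Finset.sum_Icc_succ_top ht1]
      have heq : ∀ ω, Real.exp (-(lam * LLR3 q a y (t + 1) ω)) =
          (W ω * (E1 ω - E0 ω)) * A.indicator (fun _ => (1:ℝ)) ω + W ω * E0 ω := by
        intro ω
        have hx : Real.exp (-(lam * LLR3 q a y (t + 1) ω)) = W ω *
            Real.exp (-(lam *
              Real.log (bern (q 1 (a (t+1) ω)) (y (t+1) ω) / bern (q 0 (a (t+1) ω)) (y (t+1) ω)))) := by
          rw [hsplit ω, hWdef, ← Real.exp_add]
          congr 1
          ring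
        rcases y_range (t + 1) ht1 ω with h | h
        · have hmem : ω ∉ A := by simp [hAdef, h]
          rw [hx, h, Set.indicator_of_notMem hmem]
          simp only [hE0def, vv]
          ring
        · have hmem : ω ∈ A := by simp [hAdef, h]
          rw [hx, h, Set.indicator_of_mem hmem]
          simp only [hE1def, hE0def, uu, vv]
          ring
      -- measurability / integrability for pieces
      have ha1 : Measurable[ℱ t] (a (t + 1)) := by
        have := meas_a (t + 1) ht1
        simpa using this
      have hE1meas : Measurable[ℱ t] E1 :=
        (measurable_of_countable fun k : Fin 3 => Real.exp (-(lam * uu q k))).comp ha1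
      have hE0meas : Measurable[ℱ t] E0 :=
        (measurable_of_countable fun k : Fin 3 => Real.exp (-(lam * vv q k))).comp ha1
      have hGmeas : Measurable[ℱ t] (fun ω => W ω * (E1 ω - E0 ω)) :=
        (hWmeas t).mul (hE1meas.sub hE0meas)
      have hE1b : ∀ ω, ‖E1 ω‖ ≤ B := fun ω => hB1 _ (hmM (a (t+1) ω)).1
      have hE0b : ∀ ω, ‖E0 ω‖ ≤ B := fun ω => hB1 _ (hmM (a (t+1) ω)).2.2.1
      have hGb : ∀ ω, ‖W ω * (E1 ω - E0 ω)‖ ≤ B ^ t * (B + B) := by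
        intro ω
        rw [norm_mul]
        refine mul_le_mul (hWb t ω) ?_ (norm_nonneg _) ?_
        · exact (norm_sub_le _ _).trans (add_le_add (hE1b ω) (hE0b ω))
        · exact pow_nonneg hBpos.le t
      have hAmeas : MeasurableSet A := by
        have : MeasurableSet[ℱ (t + 1)] A := meas_y (t + 1) ht1 (measurableSet_singleton 1)
        exact ℱ.le (t + 1) A this
      have hind : Integrable (A.indicator fun _ => (1:ℝ)) μ :=
        (integrable_const (1:ℝ)).indicator hAmeas
      have hq1meas : Measurable[ℱ t] (fun ω => q 1 (a (t + 1) ω)) :=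
        (measurable_of_countable fun k : Fin 3 => q 1 k).comp ha1
      have hsale : μ[A.indicator (fun _ => (1:ℝ)) | ℱ t] =ᵐ[μ] fun ω => q 1 (a (t + 1) ω) := by
        have := sale_prob (t + 1) ht1
        simpa using this
      have key := integral_mul_indicator_eq μ (ℱ.le t) hGmeas.stronglyMeasurable
        (B ^ t * (B + B)) hGb hind hsale
      -- integrability of pieces
      have hWE0int : Integrable (fun ω => W ω * E0 ω) μ := by
        refine integrable_of_bdd ?_ (C := B ^ t * B) ?_
        · exact (((hWmeas t).mul hE0meas).mono (ℱ.le t) le_rfl).aestronglyMeasurable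
        · intro ω
          rw [norm_mul]
          exact mul_le_mul (hWb t ω) (hE0b ω) (norm_nonneg _)
            (pow_nonneg hBpos.le t)
      have hGind : Integrable (fun ω => (W ω * (E1 ω - E0 ω)) * A.indicator (fun _ => (1:ℝ)) ω) μ := by
        refine integrable_of_bdd ?_ (C := B ^ t * (B + B) * 1) ?_
        · refine AEStronglyMeasurable.mul ?_ ?_
          · exact ((hGmeas.mono (ℱ.le t) le_rfl)).aestronglyMeasurable
          · exact ((stronglyMeasurable_const.indicator hAmeas)).aestronglyMeasurable
        · intro ω
          rw [norm_mul]
          refine mul_le_mul (hGb ω) ?_ (norm_nonneg _) ?_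
          · rw [Real.norm_eq_abs]
            rcases Set.indicator_eq_zero_or_self A (fun _ => (1:ℝ)) ω with h | h <;> rw [h] <;> norm_num
          · have := pow_nonneg hBpos.le t
            nlinarith
      have hGq1int : Integrable (fun ω => (W ω * (E1 ω - E0 ω)) * q 1 (a (t + 1) ω)) μ := by
        refine integrable_of_bdd ?_ (C := B ^ t * (B + B) * 1) ?_
        · exact ((hGmeas.mul hq1meas).mono (ℱ.le t) le_rfl).aestronglyMeasurable
        · intro ω
          rw [norm_mul]
          refine mul_le_mul (hGb ω) ?_ (norm_nonneg _) ?_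
          · rw [Real.norm_eq_abs, abs_of_pos (hq 1 _).1]
            exact (hq 1 _).2.le
          · have := pow_nonneg hBpos.le t
            nlinarith
      calc ∫ ω, Real.exp (-(lam * LLR3 q a y (t + 1) ω)) ∂μ
          = ∫ ω, ((W ω * (E1 ω - E0 ω)) * A.indicator (fun _ => (1:ℝ)) ω + W ω * E0 ω) ∂μ :=
            integral_congr_ae (Filter.Eventually.of_forall heq)
        _ = (∫ ω, (W ω * (E1 ω - E0 ω)) * A.indicator (fun _ => (1:ℝ)) ω ∂μ)
            + ∫ ω, W ω * E0 ω ∂μ := integral_add hGind hWE0int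
        _ = (∫ ω, (W ω * (E1 ω - E0 ω)) * q 1 (a (t + 1) ω) ∂μ) + ∫ ω, W ω * E0 ω ∂μ := by
            rw [key]
        _ = ∫ ω, W ω * (q 1 (a (t+1) ω) * E1 ω + (1 - q 1 (a (t+1) ω)) * E0 ω) ∂μ := by
            rw [← integral_add hGq1int hWE0int]
            refine integral_congr_ae (Filter.Eventually.of_forall fun ω => ?_)
            ring
        _ ≤ ∫ ω, W ω * c ∂μ := by
            refine integral_mono ?_ ((hWint t).mul_const c) fun ω => ?_
            · refine integrable_of_bdd ?_ (C := B ^ t * c) ?_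
              · refine (((hWmeas t).mul ?_).mono (ℱ.le t) le_rfl).aestronglyMeasurable
                exact ((measurable_of_countable fun k : Fin 3 =>
                  q 1 k * Real.exp (-(lam * uu q k)) + (1 - q 1 k) * Real.exp (-(lam * vv q k))).comp ha1)
              · intro ω
                rw [norm_mul]
                refine mul_le_mul (hWb t ω) ?_ (norm_nonneg _)
                  (pow_nonneg hBpos.le t)
                have h1 := (hq 1 (a (t+1) ω)).1
                have h2 := (hq 1 (a (t+1) ω)).2
                have e1 : 0 < E1 ω := Real.exp_pos _
                have e2 : 0 < E0 ω := Real.exp_pos _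
                rw [Real.norm_eq_abs, abs_of_nonneg (by nlinarith)]
                exact claim (a (t+1) ω)
            · have hWpos : 0 ≤ W ω := (Real.exp_pos _).le
              exact mul_le_mul_of_nonneg_left (claim (a (t+1) ω)) hWpos
        _ = (∫ ω, W ω ∂μ) * c := integral_mul_const c W
        _ ≤ c ^ t * c := mul_le_mul_of_nonneg_right ih hcpos.le
        _ = c ^ (t + 1) := by ring
  refine ⟨haapos, ?_⟩
  intro t ht
  set f : Ω → ℝ := fun ω => Real.exp (-(lam * LLR3 q a y t ω)) with hfdef
  set ε : ℝ := Real.exp (-(lam * (η₁ * t))) with hemdef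
  have hεpos : 0 < ε := Real.exp_pos _
  have htpos : (0:ℝ) < t := by exact_mod_cast ht
  have hsub : {ω | LLR3 q a y t ω / t < η₁} ⊆ {x | ε ≤ f x} := by
    intro ω hω
    simp only [Set.mem_setOf_eq] at hω ⊢
    rw [div_lt_iff₀ htpos] at hω
    rw [hfdef, hemdef, Real.exp_le_exp]
    nlinarith [mul_le_mul_of_nonneg_left hω.le hlam0.le]
  have hf0 : 0 ≤ᵐ[μ] f := Filter.Eventually.of_forall fun ω => (Real.exp_pos _).le
  have hMarkov := mul_meas_ge_le_integral_of_nonneg hf0 (hWint t) ε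
  have hfint : ∫ ω, f ω ∂μ ≤ c ^ t := main t
  have htoReal : (μ {x | ε ≤ f x}).toReal ≤ c ^ t / ε := by
    rw [le_div_iff₀ hεpos]
    calc (μ {x | ε ≤ f x}).toReal * ε = ε * (μ {x | ε ≤ f x}).toReal := by ring
      _ ≤ ∫ ω, f ω ∂μ := hMarkov
      _ ≤ c ^ t := hfint
  have hfinal : c ^ t / ε = Real.exp (-2 * aa ^ 2 * t / (M - m) ^ 2) := by
    rw [hcdef, hemdef, ← Real.exp_nat_mul, ← Real.exp_sub]
    congr 1
    have hI1eq : I1 = aa + η₁ := by rw [haa]; ring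
    rw [hI1eq, hlamdef]
    field_simp
    ring
  calc μ {ω | LLR3 q a y t ω / t < η₁} ≤ μ {x | ε ≤ f x} := measure_mono hsub
    _ = ENNReal.ofReal ((μ {x | ε ≤ f x}).toReal) := (ENNReal.ofReal_toReal (measure_ne_top μ _)).symm
    _ ≤ ENNReal.ofReal (c ^ t / ε) := ENNReal.ofReal_le_ofReal htoReal
    _ = ENNReal.ofReal (Real.exp (-2 * aa ^ 2 * t / (M - m) ^ 2)) := by rw [hfinal]
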